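/- Let γ > 0 and T > 0 be real numbers, let G : [0,T] → ℝ be continuous with G(t) ≥ γ² for all t ∈ [0,T], and let ρ : [0,T] → ℝ be twice differentiable with ρ''(t) = G(t)·ρ(t) for all t ∈ [0,T], ρ(0) > 0, and ρ'(0) ≥ γ·ρ(0). Then ρ(t) > 0 for all t ∈ [0,T], and moreover ρ(t+s) ≥ ρ(t)·e^(γs) for all s, t ≥ 0 with t + s ≤ T. -/

import Mathlib

/-- Monotonicity from a derivative-within that is nonnegative on the open interval. -/
lemma monoAux {a b : ℝ} {f f' : ℝ → ℝ}
    (hf : ∀ t ∈ Set.Icc a b, HasDerivWithinAt f (f' t) (Set.Icc a b) t)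
    (h : ∀ t ∈ Set.Ioo a b, 0 ≤ f' t) : MonotoneOn f (Set.Icc a b) := by
  apply monotoneOn_of_deriv_nonneg (convex_Icc a b)
    (fun t ht => (hf t ht).continuousWithinAt)
  · intro x hx
    rw [interior_Icc] at hx
    exact (((hf x (Set.Ioo_subset_Icc_self hx)).hasDerivAt
      (Icc_mem_nhds hx.1 hx.2)).differentiableAt).differentiableWithinAt
  · intro x hx
    rw [interior_Icc] at hx
    rw [((hf x (Set.Ioo_subset_Icc_self hx)).hasDerivAt (Icc_mem_nhds hx.1 hx.2)).deriv]
    exact h x hx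

/-- Comparison estimate (estg): if `ρ'' = Gρ` on `[0,T]` with `G ≥ γ² > 0`, `ρ(0) > 0` and
`ρ'(0) ≥ γρ(0)`, then `ρ > 0` on `[0,T]` and `ρ(t+s) ≥ ρ(t)e^{γs}` whenever
`s, t ≥ 0` and `t + s ≤ T`. -/
theorem stmt_12 (γ T : ℝ) (hγ : 0 < γ) (hT : 0 < T)
    (G ρ ρ' ρ'' : ℝ → ℝ)
    (hG : ContinuousOn G (Set.Icc 0 T))
    (hGγ : ∀ t ∈ Set.Icc (0 : ℝ) T, γ ^ 2 ≤ G t)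
    (hρ : ∀ t ∈ Set.Icc (0 : ℝ) T, HasDerivWithinAt ρ (ρ' t) (Set.Icc 0 T) t)
    (hρ' : ∀ t ∈ Set.Icc (0 : ℝ) T, HasDerivWithinAt ρ' (ρ'' t) (Set.Icc 0 T) t)
    (heq : ∀ t ∈ Set.Icc (0 : ℝ) T, ρ'' t = G t * ρ t)
    (h0 : 0 < ρ 0) (h1 : γ * ρ 0 ≤ ρ' 0) :
    (∀ t ∈ Set.Icc (0 : ℝ) T, 0 < ρ t) ∧
    ∀ s t : ℝ, 0 ≤ s → 0 ≤ t → t + s ≤ T → ρ t * Real.exp (γ * s) ≤ ρ (t + s) := by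
  -- the auxiliary function E(t) = e^{γt}(ρ'(t) - γρ(t))
  set E : ℝ → ℝ := fun t => Real.exp (γ * t) * (ρ' t - γ * ρ t) with hE_def
  have hexp : ∀ t : ℝ, HasDerivAt (fun t => Real.exp (γ * t)) (γ * Real.exp (γ * t)) t := by
    intro t
    simpa [mul_comm] using (HasDerivAt.exp ((hasDerivAt_id t).const_mul γ))
  -- key estimate: on any subinterval [0,b] with ρ > 0 on (0,b), we get ρ' ≥ γρ on [0,b]
  have key : ∀ b : ℝ, 0 < b → b ≤ T → (∀ t ∈ Set.Ioo (0:ℝ) b, 0 < ρ t) →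
      ∀ t ∈ Set.Icc (0:ℝ) b, γ * ρ t ≤ ρ' t := by
    intro b hb hbT hposb
    have hsub : Set.Icc (0:ℝ) b ⊆ Set.Icc 0 T := Set.Icc_subset_Icc le_rfl hbT
    have hEder : ∀ t ∈ Set.Icc (0:ℝ) b,
        HasDerivWithinAt E (Real.exp (γ * t) * ((G t - γ ^ 2) * ρ t)) (Set.Icc 0 b) t := by
      intro t ht
      have h1' := ((hρ' t (hsub ht)).sub ((hρ t (hsub ht)).const_mul γ)).mono hsub
      have h2' := ((hexp t).hasDerivWithinAt (s := Set.Icc (0:ℝ) b)).mul h1'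
      refine h2'.congr_deriv ?_
      rw [heq t (hsub ht)]
      simp only [Pi.sub_apply]
      ring
    have hmono : MonotoneOn E (Set.Icc 0 b) := by
      apply monoAux hEder
      intro t ht
      have hGt : γ ^ 2 ≤ G t := hGγ t (hsub (Set.Ioo_subset_Icc_self ht))
      have hρt : 0 < ρ t := hposb t ht
      exact mul_nonneg (Real.exp_pos _).le (mul_nonneg (by linarith) hρt.le)
    intro t ht
    have h00 : (0:ℝ) ∈ Set.Icc (0:ℝ) b := Set.mem_Icc.mpr ⟨le_rfl, le_of_lt hb⟩
    have hE0 : 0 ≤ E 0 := by simp [hE_def]; linarith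
    have hEt : 0 ≤ E t := le_trans hE0 (hmono h00 ht ht.1)
    have hep := Real.exp_pos (γ * t)
    simp only [hE_def] at hEt
    nlinarith [hEt]
  -- positivity of ρ on [0,T]
  have hpos : ∀ t ∈ Set.Icc (0:ℝ) T, 0 < ρ t := by
    by_contra hcon
    push_neg at hcon
    obtain ⟨t₀, ht₀, ht₀le⟩ := hcon
    set K : Set ℝ := Set.Icc 0 T ∩ ρ ⁻¹' Set.Iic 0 with hK_def
    have hρcont : ContinuousOn ρ (Set.Icc 0 T) := fun t ht => (hρ t ht).continuousWithinAt
    have hKclosed : IsClosed K :=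
      hρcont.preimage_isClosed_of_isClosed isClosed_Icc isClosed_Iic
    have hKne : K.Nonempty := ⟨t₀, ht₀, ht₀le⟩
    have hKbdd : BddBelow K := ⟨0, fun x hx => hx.1.1⟩
    set t₁ := sInf K with ht₁_def
    have ht₁K : t₁ ∈ K := hKclosed.csInf_mem hKne hKbdd
    have ht₁Icc : t₁ ∈ Set.Icc (0:ℝ) T := ht₁K.1
    have ht₁le : ρ t₁ ≤ 0 := ht₁K.2
    have ht₁pos : 0 < t₁ := by
      rcases lt_or_eq_of_le ht₁Icc.1 with h | h
      · exact h
      · exfalso; rw [← h] at ht₁le; linarith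
    have hIoo : ∀ t ∈ Set.Ioo (0:ℝ) t₁, 0 < ρ t := by
      intro t ht
      by_contra hle
      push_neg at hle
      have : t ∈ K := ⟨⟨ht.1.le, le_trans ht.2.le ht₁Icc.2⟩, hle⟩
      have := csInf_le hKbdd this
      linarith [ht.2]
    have hkey := key t₁ ht₁pos ht₁Icc.2 hIoo
    have hρmono : MonotoneOn ρ (Set.Icc 0 t₁) := by
      apply monoAux (f' := ρ')
        (fun t ht => (hρ t (Set.Icc_subset_Icc le_rfl ht₁Icc.2 ht)).mono
          (Set.Icc_subset_Icc le_rfl ht₁Icc.2))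
      intro t ht
      have := hkey t (Set.Ioo_subset_Icc_self ht)
      have := hIoo t ht
      nlinarith
    have : ρ 0 ≤ ρ t₁ :=
      hρmono (Set.mem_Icc.mpr ⟨le_rfl, ht₁pos.le⟩) (Set.mem_Icc.mpr ⟨ht₁pos.le, le_rfl⟩)
        ht₁pos.le
    linarith
  refine ⟨hpos, ?_⟩
  -- the estimate via F(t) = e^{-γt} ρ(t) nondecreasing
  have hkeyT : ∀ t ∈ Set.Icc (0:ℝ) T, γ * ρ t ≤ ρ' t :=
    key T hT le_rfl (fun t ht => hpos t (Set.Ioo_subset_Icc_self ht))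
  have hexp2 : ∀ t : ℝ, HasDerivAt (fun t => Real.exp (-(γ * t)))
      (-(γ * Real.exp (-(γ * t)))) t := by
    intro t
    have := (HasDerivAt.exp ((hasDerivAt_id t).const_mul (-γ)))
    simpa [neg_mul, mul_comm] using this
  have hFmono : MonotoneOn (fun t => Real.exp (-(γ * t)) * ρ t) (Set.Icc 0 T) := by
    apply monoAux (f' := fun t => Real.exp (-(γ * t)) * (ρ' t - γ * ρ t))
    · intro t ht
      have h2' := ((hexp2 t).hasDerivWithinAt (s := Set.Icc (0:ℝ) T)).mul (hρ t ht)
      refine h2'.congr_deriv ?_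
      ring
    · intro t ht
      have := hkeyT t (Set.Ioo_subset_Icc_self ht)
      exact mul_nonneg (Real.exp_pos _).le (by linarith)
  intro s t hs ht hts
  have hF := hFmono (Set.mem_Icc.mpr ⟨ht, by linarith⟩)
    (Set.mem_Icc.mpr ⟨by linarith, hts⟩) (by linarith)
  have harg : -(γ * t) + γ * (t + s) = γ * s := by ring
  calc ρ t * Real.exp (γ * s)
      = Real.exp (-(γ * t)) * ρ t * Real.exp (γ * (t + s)) := by
        rw [mul_comm (Real.exp (-(γ * t))) (ρ t), mul_assoc, ← Real.exp_add, harg]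
    _ ≤ Real.exp (-(γ * (t + s))) * ρ (t + s) * Real.exp (γ * (t + s)) :=
        mul_le_mul_of_nonneg_right hF (Real.exp_pos _).le
    _ = ρ (t + s) := by
        rw [mul_comm (Real.exp (-(γ * (t + s)))) (ρ (t + s)), mul_assoc, ← Real.exp_add]
        simp
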